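/- Let J be an adapted complex structure on a finite simple graph G and let w be a vertex of G such that Jw lies in the center of 𝔫_G. Then the neighborhood N_w of w is invariant under J up to sign (i.e., for every x ∈ N_w, either Jx ∈ N_w or −Jx ∈ N_w); in particular, the degree of w is even. Moreover, if Jw or −Jw is an edge of G, then that edge is distinguished. -/
import Mathlib


/-!  Framework: the 2-step nilpotent Lie algebra `𝔫_G` associated to a finite simple
graph `G` (Dani–Mainkar construction), and adapted complex structures on it. -/

open scoped BigOperators

namespace GraphLie

variable {V : Type*} [Fintype V] [LinearOrder V]

/-- The underlying real vector space of the Lie algebra `𝔫_G` associated to a graph `G`: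
real-valued functions on its basis `V ⊕ G.edgeSet` (vertices and edges). -/
abbrev Niln (G : SimpleGraph V) : Type _ := (V ⊕ G.edgeSet) → ℝ

variable (G : SimpleGraph V) [DecidableRel G.Adj]

/-- The basis vector of `𝔫_G` corresponding to the vertex `v`. -/
noncomputable def vtx (v : V) : Niln G := Pi.single (Sum.inl v) 1

/-- The basis vector of `𝔫_G` corresponding to the edge `e`. -/
noncomputable def edg (e : G.edgeSet) : Niln G := Pi.single (Sum.inr e) 1

/-- The basis vector of `𝔫_G` corresponding to a vertex or an edge. -/
noncomputable def basisVec (b : V ⊕ G.edgeSet) : Niln G := Pi.single b 1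

/-- The bracket of two vertex generators: for adjacent vertices `i < j` (with respect to
the chosen labeling of the vertices) `[v_i, v_j] = e_{i,j}` and `[v_j, v_i] = -e_{i,j}`;
non-adjacent vertices commute. -/
noncomputable def bracketVtx (i j : V) : Niln G :=
  if h : G.Adj i j then
    (if i < j then edg G ⟨s(i, j), G.mem_edgeSet.mpr h⟩
     else - edg G ⟨s(i, j), G.mem_edgeSet.mpr h⟩)
  else 0

/-- The Lie bracket of `𝔫_G`, extended bilinearly from the generators; all the
edge generators are central. -/
noncomputable def bracket (x y : Niln G) : Niln G :=
  ∑ i : V, ∑ j : V, (x (Sum.inl i) * y (Sum.inl j)) • bracketVtx G i j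

/-- An adapted complex structure on the graph `G`: a linear endomorphism `J` of `𝔫_G`
with `J ∘ J = -id`, whose Nijenhuis tensor vanishes, and which sends each basis vector
(vertex or edge) to plus or minus a basis vector. -/
structure AdaptedCS : Type _ where
  J : Niln G →ₗ[ℝ] Niln G
  j_squared : ∀ x, J (J x) = -x
  integrable : ∀ x y,
    bracket G x y + J (bracket G (J x) y + bracket G x (J y)) - bracket G (J x) (J y) = 0
  adapted : ∀ b : V ⊕ G.edgeSet,
    (∃ b', J (basisVec G b) = basisVec G b') ∨ (∃ b', J (basisVec G b) = - basisVec G b')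

variable {G}

/-- An edge of `G` joining vertices `v` and `w` is distinguished if `Jv = w` or `Jw = v`. -/
def AdaptedCS.Distinguished (Jc : AdaptedCS G) (e : G.edgeSet) : Prop :=
  ∃ v w : V, (e : Sym2 V) = s(v, w) ∧
    (Jc.J (vtx G v) = vtx G w ∨ Jc.J (vtx G w) = vtx G v)

end GraphLie

namespace GraphLie

variable {V : Type*} [Fintype V] [LinearOrder V] {G : SimpleGraph V} [DecidableRel G.Adj]

section
variable {V : Type*} [Fintype V] [LinearOrder V] {G : SimpleGraph V} [DecidableRel G.Adj]

lemma bracketVtx_apply_inl (i j v : V) : bracketVtx G i j (Sum.inl v) = 0 := by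
  unfold bracketVtx
  split_ifs <;> simp [edg, Pi.single_apply]

lemma bracket_apply_inl (x y : Niln G) (v : V) : bracket G x y (Sum.inl v) = 0 := by
  simp [bracket, Finset.sum_apply, bracketVtx_apply_inl]

lemma bracket_vtx_vtx (a b : V) : bracket G (vtx G a) (vtx G b) = bracketVtx G a b := by
  simp [bracket, vtx, Pi.single_apply]

lemma bracket_smul_left (c : ℝ) (x y : Niln G) :
    bracket G (c • x) y = c • bracket G x y := by
  simp [bracket, Finset.smul_sum, smul_smul, mul_assoc]

lemma bracket_smul_right (c : ℝ) (x y : Niln G) :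
    bracket G x (c • y) = c • bracket G x y := by
  simp [bracket, Finset.smul_sum, smul_smul, mul_assoc, mul_left_comm]

lemma bracket_eq_zero_left (x y : Niln G) (h : ∀ i, x (Sum.inl i) = 0) :
    bracket G x y = 0 := by simp [bracket, h]

lemma bracket_eq_zero_right (x y : Niln G) (h : ∀ i, y (Sum.inl i) = 0) :
    bracket G x y = 0 := by simp [bracket, h]

lemma edg_apply_inl (e : G.edgeSet) (v : V) : edg G e (Sum.inl v) = 0 := by
  simp [edg, Pi.single_apply]

lemma bracketVtx_adj {a b : V} (h : G.Adj a b) :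
    ∃ σ : ℝ, (σ = 1 ∨ σ = -1) ∧
      bracketVtx G a b = σ • edg G ⟨s(a, b), G.mem_edgeSet.mpr h⟩ := by
  unfold bracketVtx
  rw [dif_pos h]
  split_ifs
  · exact ⟨1, Or.inl rfl, by simp⟩
  · exact ⟨-1, Or.inr rfl, by simp⟩

lemma bracketVtx_not_adj {a b : V} (h : ¬ G.Adj a b) : bracketVtx G a b = 0 := by
  unfold bracketVtx; rw [dif_neg h]

lemma edg_ne_zero (e : G.edgeSet) : edg G e ≠ 0 := by
  intro h
  have := congrFun h (Sum.inr e)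
  simp [edg] at this

end
section
set_option linter.unusedSectionVars false
variable {V : Type*} [Fintype V] [LinearOrder V] {G : SimpleGraph V} [DecidableRel G.Adj]

lemma J_inj (Jc : AdaptedCS G) : Function.Injective Jc.J := by
  intro x y h
  have := congrArg Jc.J h
  rw [Jc.j_squared, Jc.j_squared] at this
  exact neg_injective this

lemma adapted' (Jc : AdaptedCS G) (b : V ⊕ G.edgeSet) :
    ∃ (α : ℝ) (b' : V ⊕ G.edgeSet), (α = 1 ∨ α = -1) ∧
      Jc.J (basisVec G b) = α • basisVec G b' := by
  rcases Jc.adapted b with ⟨b', h⟩ | ⟨b', h⟩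
  · exact ⟨1, b', Or.inl rfl, by simpa using h⟩
  · exact ⟨-1, b', Or.inr rfl, by simpa [neg_smul] using h⟩

lemma sign_ne_zero {α : ℝ} (hα : α = 1 ∨ α = -1) : α ≠ 0 := by
  rcases hα with rfl | rfl <;> norm_num

/-- A vertex basis vector is not sent to ± itself. -/
lemma J_vtx_ne_self (Jc : AdaptedCS G) (u : V) {α : ℝ} (hα : α = 1 ∨ α = -1) :
    Jc.J (vtx G u) ≠ α • vtx G u := by
  intro h
  have h2 := Jc.j_squared (vtx G u)
  rw [h, map_smul, h, smul_smul] at h2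
  have := congrFun h2 (Sum.inl u)
  rcases hα with rfl | rfl <;> simp [vtx] at this <;> norm_num at this

lemma vtx_sign_eq {a b : V} {α β : ℝ} (hα : α = 1 ∨ α = -1) (hβ : β = 1 ∨ β = -1)
    (h : α • vtx G a = β • vtx G b) : a = b := by
  by_contra hab
  have h1 : (α • vtx G a) (Sum.inl a) = α := by simp [vtx]
  have h2 : (β • vtx G b) (Sum.inl a) = 0 := by
    simp [vtx, Pi.single_apply, hab]
  rw [h] at h1
  rw [h1] at h2
  exact sign_ne_zero hα h2

/-- Even cardinality from a fixed-point-free involution. -/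
lemma even_card_of_invol {α : Type*} [DecidableEq α] (s : Finset α) (f : α → α)
    (hmem : ∀ a ∈ s, f a ∈ s) (hinv : ∀ a ∈ s, f (f a) = a) (hne : ∀ a ∈ s, f a ≠ a) :
    Even s.card := by
  induction s using Finset.strongInduction with
  | _ s ih =>
    rcases s.eq_empty_or_nonempty with rfl | ⟨a, ha⟩
    · simp
    · set t := (s.erase a).erase (f a) with ht
      have hfa : f a ∈ s := hmem a ha
      have hfane : f a ≠ a := hne a ha
      have htsub : t ⊂ s := by
        refine Finset.ssubset_of_subset_of_ssubset ?_ (Finset.erase_ssubset ha)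
        exact Finset.erase_subset _ _
      have hcard : t.card + 2 = s.card := by
        rw [ht, Finset.card_erase_of_mem, Finset.card_erase_of_mem ha]
        · have : 1 ≤ s.card := Finset.card_pos.mpr ⟨a, ha⟩
          have h2 : 2 ≤ s.card := by
            have : ({a, f a} : Finset α) ⊆ s := by
              intro x hx; simp at hx; rcases hx with rfl | rfl <;> assumption
            calc 2 = ({a, f a} : Finset α).card := by
                    rw [Finset.card_insert_of_notMem (by simpa using Ne.symm hfane), Finset.card_singleton]
              _ ≤ s.card := Finset.card_le_card this
          omega
        · exact Finset.mem_erase.mpr ⟨hfane, hfa⟩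
      have hmem' : ∀ b ∈ t, f b ∈ t := by
        intro b hb
        rw [ht, Finset.mem_erase, Finset.mem_erase] at hb ⊢
        refine ⟨?_, ?_, hmem b hb.2.2⟩
        · intro hfb; exact hb.2.1 (by rw [← hinv a ha, ← hfb, hinv b hb.2.2])
        · intro hfb; exact hb.1 (by rw [← hinv b hb.2.2, hfb])
      have ht' : ∀ b ∈ t, b ∈ s := fun b hb => (Finset.mem_erase.mp (Finset.mem_erase.mp hb).2).2
      obtain ⟨k, hk⟩ := ih t htsub hmem' (fun b hb => hinv b (ht' b hb)) (fun b hb => hne b (ht' b hb))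
      exact ⟨k + 1, by omega⟩

end
section
set_option linter.unusedSectionVars false
variable {V : Type*} [Fintype V] [LinearOrder V] {G : SimpleGraph V} [DecidableRel G.Adj]

lemma basisVec_inl (v : V) : basisVec G (Sum.inl v) = vtx G v := rfl
lemma basisVec_inr (e : G.edgeSet) : basisVec G (Sum.inr e) = edg G e := rfl

lemma bracketVtx_ne_zero {a b : V} (h : G.Adj a b) : bracketVtx G a b ≠ 0 := by
  obtain ⟨σ, hσ, hb⟩ := bracketVtx_adj h
  rw [hb]
  intro h0
  rcases smul_eq_zero.mp h0 with h1 | h1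
  · exact sign_ne_zero hσ h1
  · exact edg_ne_zero _ h1

lemma key1 (Jc : AdaptedCS G) (w : V)
    (hc : ∀ y : Niln G, bracket G (Jc.J (vtx G w)) y = 0) {x : V} (hx : G.Adj w x) :
    ∃ (x' : V) (α : ℝ), (α = 1 ∨ α = -1) ∧ G.Adj w x' ∧
      Jc.J (vtx G x) = α • vtx G x' := by
  obtain ⟨α, b', hα, hJ⟩ := adapted' Jc (Sum.inl x)
  rw [basisVec_inl] at hJ
  have main : bracket G (vtx G w) (Jc.J (vtx G x)) ≠ 0 := by
    intro h0
    have hint := Jc.integrable (vtx G w) (vtx G x)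
    rw [hc (vtx G x), hc (Jc.J (vtx G x)), h0, bracket_vtx_vtx] at hint
    simp only [add_zero, zero_add, map_zero, sub_zero] at hint
    exact bracketVtx_ne_zero hx hint
  rcases b' with x' | e'
  · rw [basisVec_inl] at hJ
    refine ⟨x', α, hα, ?_, hJ⟩
    by_contra hadj
    apply main
    rw [hJ, bracket_smul_right, bracket_vtx_vtx, bracketVtx_not_adj hadj, smul_zero]
  · exfalso
    apply main
    rw [basisVec_inr] at hJ
    rw [hJ, bracket_smul_right,
      bracket_eq_zero_right _ _ (fun i => edg_apply_inl e' i), smul_zero]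

end

/-- If `w` is a vertex such that `Jw` lies in the center of `𝔫_G`, then
the neighborhood of `w` is invariant under `J` up to sign, the degree of `w` is even, and
if `Jw` is (up to sign) an edge then that edge is distinguished. -/
theorem statement4 (Jc : AdaptedCS G) (w : V)
    (hc : ∀ y : Niln G, bracket G (Jc.J (vtx G w)) y = 0) :
    (∀ x ∈ G.neighborSet w, ∃ x' ∈ G.neighborSet w,
        Jc.J (vtx G x) = vtx G x' ∨ Jc.J (vtx G x) = - vtx G x') ∧
    Even (G.degree w) ∧
    (∀ e : G.edgeSet, (Jc.J (vtx G w) = edg G e ∨ Jc.J (vtx G w) = - edg G e) →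
        Jc.Distinguished e) := by
  refine ⟨?_, ?_, ?_⟩
  · -- Part 1
    intro x hx
    rw [SimpleGraph.mem_neighborSet] at hx
    obtain ⟨x', α, hα, hadj, hJ⟩ := key1 Jc w hc hx
    refine ⟨x', (SimpleGraph.mem_neighborSet G w x').mpr hadj, ?_⟩
    rcases hα with rfl | rfl
    · left; simpa using hJ
    · right; simpa [neg_smul] using hJ
  · -- Part 2: even degree
    have H : ∀ u : V, ∃ (x' : V) (α : ℝ), (α = 1 ∨ α = -1) ∧
        (G.Adj w u → (G.Adj w x' ∧ Jc.J (vtx G u) = α • vtx G x')) := by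
      intro u
      by_cases h : G.Adj w u
      · obtain ⟨x', α, hα, h1, h2⟩ := key1 Jc w hc h
        exact ⟨x', α, hα, fun _ => ⟨h1, h2⟩⟩
      · exact ⟨u, 1, Or.inl rfl, fun h' => absurd h' h⟩
    choose f αf hαf hf using H
    have hdeg : G.degree w = (G.neighborFinset w).card := rfl
    rw [hdeg]
    apply even_card_of_invol (G.neighborFinset w) f
    · intro a ha
      rw [SimpleGraph.mem_neighborFinset] at ha ⊢
      exact (hf a ha).1
    · intro a ha
      rw [SimpleGraph.mem_neighborFinset] at ha
      obtain ⟨h1, h2⟩ := hf a ha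
      obtain ⟨h3, h4⟩ := hf (f a) h1
      have h5 := Jc.j_squared (vtx G a)
      rw [h2, map_smul, h4, smul_smul] at h5
      have h6 : (αf a * αf (f a)) • vtx G (f (f a)) = (-1 : ℝ) • vtx G a := by
        rw [h5]; simp
      have hsgn : αf a * αf (f a) = 1 ∨ αf a * αf (f a) = -1 := by
        rcases hαf a with h | h <;> rcases hαf (f a) with h' | h' <;>
          rw [h, h'] <;> norm_num
      exact vtx_sign_eq hsgn (Or.inr rfl) h6
    · intro a ha
      rw [SimpleGraph.mem_neighborFinset] at ha
      obtain ⟨h1, h2⟩ := hf a ha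
      intro hfa
      rw [hfa] at h2
      exact J_vtx_ne_self Jc a (hαf a) h2
  · -- Part 3: distinguished edge
    intro e he
    obtain ⟨ε, hε, hJw⟩ : ∃ ε : ℝ, (ε = 1 ∨ ε = -1) ∧ Jc.J (vtx G w) = ε • edg G e := by
      rcases he with h | h
      · exact ⟨1, Or.inl rfl, by simpa using h⟩
      · exact ⟨-1, Or.inr rfl, by simpa [neg_smul] using h⟩
    have hJe : Jc.J (edg G e) = (-ε) • vtx G w := by
      have hee : edg G e = ε • (Jc.J (vtx G w)) := by
        rw [hJw, smul_smul]; rcases hε with rfl | rfl <;> norm_num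
      rw [hee, map_smul, Jc.j_squared, smul_neg, ← neg_smul]
    obtain ⟨a, b, hab⟩ : ∃ a b : V, (e : Sym2 V) = s(a, b) :=
      Sym2.ind (fun x y => ⟨x, y, rfl⟩) (e : Sym2 V)
    have hadj : G.Adj a b := G.mem_edgeSet.mp (hab ▸ e.prop)
    -- both endpoints are mapped to (± a) vertex
    have endpoint : ∀ u v : V, G.Adj u v → (e : Sym2 V) = s(u, v) →
        ∃ (c : V) (α : ℝ), (α = 1 ∨ α = -1) ∧ Jc.J (vtx G u) = α • vtx G c := by
      intro u v huv heuv
      obtain ⟨α, b', hα, hJ⟩ := adapted' Jc (Sum.inl u)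
      rw [basisVec_inl] at hJ
      rcases b' with c | e₁
      · exact ⟨c, α, hα, hJ⟩
      · exfalso
        rw [basisVec_inr] at hJ
        have hE : (⟨s(u, v), G.mem_edgeSet.mpr huv⟩ : G.edgeSet) = e :=
          Subtype.ext heuv.symm
        obtain ⟨σ, hσ, hb⟩ := bracketVtx_adj huv
        rw [hE] at hb
        have h1 : bracket G (Jc.J (vtx G u)) (vtx G v) = 0 := by
          rw [hJ, bracket_smul_left,
            bracket_eq_zero_left _ _ (fun i => edg_apply_inl e₁ i), smul_zero]
        have h2 : bracket G (Jc.J (vtx G u)) (Jc.J (vtx G v)) = 0 := by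
          rw [hJ, bracket_smul_left,
            bracket_eq_zero_left _ _ (fun i => edg_apply_inl e₁ i), smul_zero]
        have hint := Jc.integrable (vtx G u) (vtx G v)
        rw [h1, h2, bracket_vtx_vtx, hb, zero_add, sub_zero] at hint
        -- hint : σ • edg e + J (bracket u (J v)) = 0
        have hint2 := congrArg Jc.J hint
        rw [map_zero, map_add, map_smul, hJe, Jc.j_squared] at hint2
        -- hint2 : σ • ((-ε) • vtx w) - bracket u (J v) = 0
        have hw := congrFun hint2 (Sum.inl w)
        simp only [Pi.add_apply, Pi.neg_apply, Pi.smul_apply, smul_eq_mul,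
          bracket_apply_inl, Pi.zero_apply, vtx, Pi.single_eq_same] at hw
        rcases hσ with rfl | rfl <;> rcases hε with rfl | rfl <;> norm_num at hw
    obtain ⟨c, α, hα, hJa⟩ := endpoint a b hadj hab
    obtain ⟨d, β, hβ, hJb⟩ := endpoint b a hadj.symm (hab.trans (Sym2.eq_swap))
    have hE : (⟨s(a, b), G.mem_edgeSet.mpr hadj⟩ : G.edgeSet) = e :=
      Subtype.ext hab.symm
    obtain ⟨σ, hσ, hba⟩ := bracketVtx_adj hadj
    rw [hE] at hba
    have e1 : bracket G (Jc.J (vtx G a)) (vtx G b) = α • bracketVtx G c b := by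
      rw [hJa, bracket_smul_left, bracket_vtx_vtx]
    have e2 : bracket G (vtx G a) (Jc.J (vtx G b)) = β • bracketVtx G a d := by
      rw [hJb, bracket_smul_right, bracket_vtx_vtx]
    have e3 : bracket G (Jc.J (vtx G a)) (Jc.J (vtx G b))
        = (α * β) • bracketVtx G c d := by
      rw [hJa, hJb, bracket_smul_left, bracket_smul_right, bracket_vtx_vtx, smul_smul]
    have hint := Jc.integrable (vtx G a) (vtx G b)
    rw [e1, e2, e3, bracket_vtx_vtx, hba] at hint
    have hint2 := congrArg Jc.J hint
    rw [map_zero, map_sub, map_add, map_smul, map_smul, hJe,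
      Jc.j_squared (α • bracketVtx G c b + β • bracketVtx G a d)] at hint2
    have hw := congrFun hint2 (Sum.inl w)
    simp only [Pi.add_apply, Pi.sub_apply, Pi.neg_apply, Pi.smul_apply, smul_eq_mul,
      bracketVtx_apply_inl, Pi.zero_apply, vtx, Pi.single_eq_same,
      mul_zero, add_zero, neg_zero, mul_one] at hw
    -- hw should say : σ * -ε + 0 - (α*β) * (J (bracketVtx c d)) (inl w) = 0
    have hX : Jc.J (bracketVtx G c d) (Sum.inl w) ≠ 0 := by
      intro h0
      rw [h0] at hw
      rcases hσ with rfl | rfl <;> rcases hε with rfl | rfl <;> norm_num at hw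
    have hcd : G.Adj c d := by
      by_contra h
      apply hX
      rw [bracketVtx_not_adj h, map_zero]
      rfl
    obtain ⟨τ, hτ, hbcd⟩ := bracketVtx_adj hcd
    obtain ⟨γ, b₂, hγ, hJe₂⟩ := adapted' Jc (Sum.inr ⟨s(c, d), G.mem_edgeSet.mpr hcd⟩)
    rw [basisVec_inr] at hJe₂
    have hb₂ : b₂ = Sum.inl w := by
      have hXv : Jc.J (bracketVtx G c d) (Sum.inl w)
          = τ * (γ * basisVec G b₂ (Sum.inl w)) := by
        rw [hbcd, map_smul, hJe₂]
        simp [mul_assoc]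
      rcases b₂ with v₂ | e₃
      · by_contra hne
        apply hX
        rw [hXv]
        have : basisVec G (Sum.inl v₂) (Sum.inl w) = 0 := by
          simp only [basisVec, Pi.single_apply]
          rw [if_neg]
          intro h; exact hne (by rw [Sum.inl.injEq] at h; rw [h])
        rw [this, mul_zero, mul_zero]
      · exfalso
        apply hX
        rw [hXv]
        have : basisVec G (Sum.inr e₃) (Sum.inl w) = 0 := by
          simp [basisVec, Pi.single_apply]
        rw [this, mul_zero, mul_zero]
    subst hb₂
    rw [basisVec_inl] at hJe₂
    -- J (edg ⟨s(c,d)⟩) = γ • vtx w ; J (edg e) = -ε • vtx w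
    have hkey : edg G ⟨s(c, d), G.mem_edgeSet.mpr hcd⟩ = (-(γ * ε)) • edg G e := by
      apply J_inj Jc
      rw [hJe₂, map_smul, hJe, smul_smul]
      congr 1
      rcases hγ with rfl | rfl <;> rcases hε with rfl | rfl <;> norm_num
    have he₂e : (⟨s(c, d), G.mem_edgeSet.mpr hcd⟩ : G.edgeSet) = e := by
      by_contra hne
      have := congrFun hkey (Sum.inr ⟨s(c, d), G.mem_edgeSet.mpr hcd⟩)
      simp only [edg, Pi.single_eq_same, Pi.smul_apply, Pi.single_apply, smul_eq_mul] at this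
      rw [if_neg (by simpa using hne)] at this
      norm_num at this
    have hsym : s(c, d) = s(a, b) := by
      have := congrArg Subtype.val he₂e
      simpa [hab] using this
    rcases Sym2.eq_iff.mp hsym with ⟨hca, hdb⟩ | ⟨hcb, hda⟩
    · rw [hca] at hJa
      exact absurd hJa (J_vtx_ne_self Jc a hα)
    · rw [hcb] at hJa
      rcases hα with rfl | rfl
      · exact ⟨a, b, hab, Or.inl (by simpa using hJa)⟩
      · refine ⟨a, b, hab, Or.inr ?_⟩
        have h5 := Jc.j_squared (vtx G a)
        rw [hJa, map_smul] at h5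
        have : Jc.J (vtx G b) = vtx G a := by
          have := congrArg (fun z => (-1 : ℝ) • z) h5
          simpa using this
        exact this


end GraphLie
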